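/- Comparison theorem for uniform large deviation upper bounds (Theorem 4.1, upper bound, abstract form): Let (E, ρ) be a separable metric space, I and I' nonempty index sets, Ψ : I → I' a map, (Ω, 𝓕, P) a probability space, and for each t > 0 let L_t^ν (ν ∈ I) and L̄_t^{ν'} (ν' ∈ I') be Borel-measurable maps from Ω to E. Let J : E → [0,∞] have compact level sets. Assume: (i) for every closed set A ⊆ E, limsup_{t→∞} (1/t) · sup_{ν'∈Ψ(I)} log P(L̄_t^{ν'} ∈ A) ≤ −inf_{x∈A} J(x); (ii) for each ν ∈ I there is a jointly measurable g^ν : Ω × [0,∞) → [0,1] such that for every t > 0, ρ(L_t^ν, L̄_t^{Ψ(ν)}) ≤ (1/t) · ∫₀^t g^ν(·, s) ds holds P-almost surely; and (iii) for every real N ≥ 1, sup_{ν∈I} E[exp(N · ∫₀^∞ g^ν(·, s) ds)] < ∞. Then for every closed set A ⊆ E, limsup_{t→∞} (1/t) · sup_{ν∈I} log P(L_t^ν ∈ A) ≤ −inf_{x∈A} J(x). -/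

import Mathlib

open MeasureTheory Filter Set
open scoped ENNReal NNReal

/-- The exponential function on `ℝ≥0∞`, with the convention `exp (+∞) = +∞`. -/
noncomputable def expENN (x : ℝ≥0∞) : ℝ≥0∞ :=
  if x = ⊤ then ⊤ else ENNReal.ofReal (Real.exp x.toReal)

lemma expENN_monotone : Monotone expENN := by
  intro x y h
  rcases eq_or_ne y ⊤ with rfl | hy
  · simp [expENN]
  · have hx : x ≠ ⊤ := fun hx => hy (top_le_iff.1 (hx ▸ h))
    simp only [expENN, hx, hy, if_false]
    exact ENNReal.ofReal_le_ofReal (Real.exp_le_exp.2 (ENNReal.toReal_mono hy h))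

lemma one_le_expENN (x : ℝ≥0∞) : 1 ≤ expENN x := by
  rcases eq_or_ne x ⊤ with rfl | hx
  · simp [expENN]
  · simp only [expENN, hx, if_false]
    rw [show (1 : ℝ≥0∞) = ENNReal.ofReal 1 by simp]
    exact ENNReal.ofReal_le_ofReal (Real.one_le_exp ENNReal.toReal_nonneg)

lemma measurable_expENN : Measurable expENN := by
  unfold expENN
  refine Measurable.ite ?_ measurable_const ?_
  · simpa using measurableSet_singleton (⊤ : ℝ≥0∞)
  · exact ENNReal.measurable_ofReal.comp (Real.measurable_exp.comp ENNReal.measurable_toReal)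

lemma ereal_coe_mul_add (x a : ℝ) (hx : 0 ≤ x) (b : EReal) :
    (x : EReal) * ((a : EReal) + b) = (x : EReal) * (a : EReal) + (x : EReal) * b := by
  rcases eq_or_lt_of_le hx with h | h
  · rw [← h]; simp
  · induction b with
    | bot =>
        rw [EReal.add_bot, EReal.mul_bot_of_pos (by exact_mod_cast h), EReal.add_bot]
    | coe b => norm_cast; ring
    | top =>
        rw [EReal.coe_add_top, EReal.mul_top_of_pos (by exact_mod_cast h),
          EReal.add_top_of_ne_bot (by exact_mod_cast EReal.coe_ne_bot (x * a))]

/-- **Comparison theorem for uniform LDP, upper bound** (Theorem 4.1 of the paper,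
abstract form). If the reference family `Lbar` (indexed over `Ψ(I)`) satisfies the
uniform large deviation upper bound with rate function `J`, and `ρ(L_t^ν, L̄_t^{Ψν})`
is dominated by the time average of a `[0,1]`-valued process `g^ν` having uniformly
finite exponential moments, then `L` satisfies the same uniform upper bound. -/
theorem comparison_theorem_upper
    {E : Type*} [MetricSpace E] [TopologicalSpace.SeparableSpace E]
    [MeasurableSpace E] [BorelSpace E]
    {I I' : Type*} [Nonempty I] [Nonempty I'] (Ψ : I → I')
    {Ω : Type*} [MeasurableSpace Ω] (P : Measure Ω) [IsProbabilityMeasure P]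
    (L : I → ℝ → Ω → E) (Lbar : I' → ℝ → Ω → E)
    (hL : ∀ ν : I, ∀ t > (0 : ℝ), Measurable (L ν t))
    (hLbar : ∀ ν' : I', ∀ t > (0 : ℝ), Measurable (Lbar ν' t))
    (J : E → ℝ≥0∞) (hJ : ∀ r : NNReal, IsCompact {x : E | J x ≤ r})
    -- (i) uniform upper bound for the reference family, over `Ψ(I)`
    (hupper : ∀ A : Set E, IsClosed A →
      limsup (fun t : ℝ =>
          ((1 / t : ℝ) : EReal) *
            ⨆ ν' ∈ Set.range Ψ, ENNReal.log (P {ω | Lbar ν' t ω ∈ A})) atTop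
        ≤ -(⨅ x ∈ A, (J x : EReal)))
    -- (ii)+(iii) domination by a process with uniform exponential moments
    (hdom : ∃ g : I → Ω → ℝ → ℝ,
      (∀ ν : I, Measurable (Function.uncurry (g ν))) ∧
      (∀ (ν : I) (ω : Ω) (s : ℝ), g ν ω s ∈ Set.Icc (0 : ℝ) 1) ∧
      (∀ ν : I, ∀ t > (0 : ℝ), ∀ᵐ ω ∂P,
        ENNReal.ofReal (dist (L ν t ω) (Lbar (Ψ ν) t ω)) ≤
          (ENNReal.ofReal t)⁻¹ *
            ∫⁻ s in Set.Icc (0 : ℝ) t, ENNReal.ofReal (g ν ω s)) ∧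
      (∀ N : ℝ, 1 ≤ N →
        (⨆ ν : I, ∫⁻ ω, expENN (ENNReal.ofReal N *
            ∫⁻ s in Set.Ici (0 : ℝ), ENNReal.ofReal (g ν ω s)) ∂P) < ⊤)) :
    ∀ A : Set E, IsClosed A →
      limsup (fun t : ℝ =>
          ((1 / t : ℝ) : EReal) *
            ⨆ ν : I, ENNReal.log (P {ω | L ν t ω ∈ A})) atTop
        ≤ -(⨅ x ∈ A, (J x : EReal)) := by
  obtain ⟨g, hgmeas, hg01, hgdom, hgexp⟩ := hdom
  intro A hA
  set X : I → Ω → ℝ≥0∞ :=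
    fun ν ω => ∫⁻ s in Set.Ici (0 : ℝ), ENNReal.ofReal (g ν ω s) with hX
  have Xmeas : ∀ ν : I, Measurable (X ν) := by
    intro ν
    exact Measurable.lintegral_prod_right' (ENNReal.measurable_ofReal.comp (hgmeas ν))
  set F : ℝ → EReal :=
    fun t => ((1 / t : ℝ) : EReal) * ⨆ ν : I, ENNReal.log (P {ω | L ν t ω ∈ A}) with hFdef
  -- Step 0: the limsup is always ≤ 0
  have hF0 : limsup F atTop ≤ 0 := by
    apply limsup_le_of_le (by isBoundedDefault)
    filter_upwards [eventually_gt_atTop (0 : ℝ)] with t ht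
    have h1 : (⨆ ν : I, ENNReal.log (P {ω | L ν t ω ∈ A})) ≤ 0 :=
      iSup_le fun ν => ENNReal.log_le_zero_iff.2 prob_le_one
    have h0e : (0 : EReal) ≤ ((1 / t : ℝ) : EReal) := by
      exact_mod_cast (by positivity : (0 : ℝ) ≤ 1 / t)
    calc F t ≤ ((1 / t : ℝ) : EReal) * 0 := mul_le_mul_of_nonneg_left h1 h0e
      _ = 0 := mul_zero _
  -- Main estimate
  have main : ∀ c : ℝ, 0 < c → (c : EReal) < ⨅ x ∈ A, (J x : EReal) →
      limsup F atTop ≤ -(c : EReal) := by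
    intro c hc hcr
    -- the compact level set and the separation distance δ
    have hdisjKA : Disjoint {x : E | J x ≤ (c.toNNReal : ℝ≥0∞)} A := by
      rw [Set.disjoint_left]
      intro x hxK hxA
      have h1 : (⨅ x ∈ A, (J x : EReal)) ≤ (J x : EReal) := iInf₂_le x hxA
      have h2 : (J x : EReal) ≤ (c : EReal) := by
        calc (J x : EReal) ≤ (((c.toNNReal : ℝ≥0∞)) : EReal) := by exact_mod_cast hxK
          _ = ((c.toNNReal : ℝ) : EReal) := EReal.coe_nnreal_eq_coe_real _
          _ = (c : EReal) := by rw [Real.coe_toNNReal _ hc.le]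
      exact absurd (hcr.trans_le h1) (not_lt.2 h2)
    obtain ⟨δ, hδ, hdisj2⟩ := hdisjKA.exists_cthickenings (hJ c.toNNReal) hA
    set B : Set E := Metric.cthickening δ A with hBdef
    have hB : IsClosed B := Metric.isClosed_cthickening
    -- the rate function is ≥ c on B
    have hinfB : (c : EReal) ≤ ⨅ x ∈ B, (J x : EReal) := by
      refine le_iInf₂ fun x hx => ?_
      have hxK : x ∉ {x : E | J x ≤ (c.toNNReal : ℝ≥0∞)} := by
        intro hxK
        exact Set.disjoint_left.1 hdisj2
          (Metric.self_subset_cthickening _ hxK) hx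
      have h1 : (c.toNNReal : ℝ≥0∞) ≤ J x := le_of_not_ge hxK
      calc (c : EReal) = ((c.toNNReal : ℝ) : EReal) := by rw [Real.coe_toNNReal _ hc.le]
        _ = (((c.toNNReal : ℝ≥0∞)) : EReal) := (EReal.coe_nnreal_eq_coe_real _).symm
        _ ≤ (J x : EReal) := by exact_mod_cast h1
    set LP : ℝ → EReal :=
      fun t => ⨆ ν' ∈ Set.range Ψ, ENNReal.log (P {ω | Lbar ν' t ω ∈ B}) with hLPdef
    have hLP : limsup (fun t : ℝ => ((1 / t : ℝ) : EReal) * LP t) atTop ≤ -(c : EReal) :=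
      (hupper B hB).trans (EReal.neg_le_neg_iff.2 hinfB)
    -- the exponent N and the constant C'
    set N : ℝ := max 1 ((c + 1) / δ) with hNdef
    have hN1 : (1 : ℝ) ≤ N := le_max_left _ _
    have hN0 : (0 : ℝ) < N := lt_of_lt_of_le one_pos hN1
    have hNδ : c + 1 ≤ N * δ := (div_le_iff₀ hδ).1 (le_max_right _ _)
    set C : ℝ≥0∞ := ⨆ ν : I, ∫⁻ ω, expENN (ENNReal.ofReal N * X ν ω) ∂P with hCdef
    have hC : C < ⊤ := hgexp N hN1
    set C' : ℝ := C.toReal with hC'def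
    have hCC' : C = ENNReal.ofReal C' := (ENNReal.ofReal_toReal hC.ne).symm
    have h1C : (1 : ℝ≥0∞) ≤ C := by
      obtain ⟨ν₀⟩ := (inferInstance : Nonempty I)
      calc (1 : ℝ≥0∞) = ∫⁻ _, 1 ∂P := by simp
        _ ≤ ∫⁻ ω, expENN (ENNReal.ofReal N * X ν₀ ω) ∂P :=
            lintegral_mono fun ω => one_le_expENN _
        _ ≤ C := le_iSup (fun ν => ∫⁻ ω, expENN (ENNReal.ofReal N * X ν ω) ∂P) ν₀
    have h1C' : (1 : ℝ) ≤ C' := by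
      rw [hCC'] at h1C
      exact_mod_cast (ENNReal.one_le_ofReal).1 h1C
    have hC'pos : (0 : ℝ) < C' := lt_of_lt_of_le one_pos h1C'
    have fmeas : ∀ ν : I, Measurable fun ω => expENN (ENNReal.ofReal N * X ν ω) :=
      fun ν => measurable_expENN.comp (measurable_const.mul (Xmeas ν))
    -- per-time, per-index measure estimate
    have key : ∀ t > (0 : ℝ), ∀ ν : I,
        P {ω | L ν t ω ∈ A} ≤ P {ω | Lbar (Ψ ν) t ω ∈ B} +
          ENNReal.ofReal (C' / Real.exp (N * (δ * t))) := by
      intro t ht ν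
      set S : Set Ω := {ω | ENNReal.ofReal (δ * t) ≤ X ν ω} with hSdef
      have hsub : {ω | L ν t ω ∈ A} ≤ᵐ[P]
          (({ω | Lbar (Ψ ν) t ω ∈ B} ∪ S : Set Ω) : Set Ω) := by
        filter_upwards [hgdom ν t ht] with ω hω hmem
        rcases le_or_gt (dist (L ν t ω) (Lbar (Ψ ν) t ω)) δ with hd | hd
        · exact Set.mem_union_left _
            (Metric.mem_cthickening_of_dist_le _ _ δ A hmem (by rwa [dist_comm]))
        · refine Set.mem_union_right _ ?_
          have h1 : ENNReal.ofReal δ ≤ (ENNReal.ofReal t)⁻¹ * X ν ω := by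
            refine le_trans (le_trans (ENNReal.ofReal_le_ofReal hd.le) hω) ?_
            exact mul_le_mul_right (lintegral_mono_set Set.Icc_subset_Ici_self) _
          have ht0 : ENNReal.ofReal t ≠ 0 := by
            simp [ENNReal.ofReal_eq_zero, not_le, ht]
          have htop : ENNReal.ofReal t ≠ ⊤ := ENNReal.ofReal_ne_top
          have h2 := mul_le_mul_right h1 (ENNReal.ofReal t)
          rw [← mul_assoc, ENNReal.mul_inv_cancel ht0 htop, one_mul] at h2
          show ENNReal.ofReal (δ * t) ≤ X ν ω
          calc ENNReal.ofReal (δ * t) = ENNReal.ofReal t * ENNReal.ofReal δ := by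
                rw [← ENNReal.ofReal_mul ht.le, mul_comm δ t]
            _ ≤ X ν ω := h2
      -- exponential Chebyshev for the bad event
      set ε : ℝ≥0∞ := ENNReal.ofReal (Real.exp (N * (δ * t))) with hεdef
      have hεeq : expENN (ENNReal.ofReal N * ENNReal.ofReal (δ * t)) = ε := by
        rw [← ENNReal.ofReal_mul hN0.le]
        simp only [expENN, ENNReal.ofReal_ne_top, if_false]
        rw [ENNReal.toReal_ofReal (by positivity)]
      have hSsub : S ⊆ {ω | ε ≤ expENN (ENNReal.ofReal N * X ν ω)} := by
        intro ω hω
        rw [Set.mem_setOf_eq, ← hεeq]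
        exact expENN_monotone (mul_le_mul_right hω _)
      have hmar := mul_meas_ge_le_lintegral₀ (μ := P) (fmeas ν).aemeasurable ε
      have hint : ∫⁻ ω, expENN (ENNReal.ofReal N * X ν ω) ∂P ≤ ENNReal.ofReal C' := by
        rw [← hCC']
        exact le_iSup (fun ν => ∫⁻ ω, expENN (ENNReal.ofReal N * X ν ω) ∂P) ν
      have hε0 : ε ≠ 0 := by
        simp [hεdef, ENNReal.ofReal_eq_zero, not_le, Real.exp_pos]
      have hPS : P S ≤ ENNReal.ofReal (C' / Real.exp (N * (δ * t))) := by
        rw [ENNReal.ofReal_div_of_pos (Real.exp_pos _)]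
        rw [ENNReal.le_div_iff_mul_le (Or.inl hε0) (Or.inl ENNReal.ofReal_ne_top)]
        calc P S * ε ≤ P {ω | ε ≤ expENN (ENNReal.ofReal N * X ν ω)} * ε :=
              mul_le_mul_left (measure_mono hSsub) ε
          _ = ε * P {ω | ε ≤ expENN (ENNReal.ofReal N * X ν ω)} := mul_comm _ _
          _ ≤ ∫⁻ ω, expENN (ENNReal.ofReal N * X ν ω) ∂P := hmar
          _ ≤ ENNReal.ofReal C' := hint
      calc P {ω | L ν t ω ∈ A} ≤ P ({ω | Lbar (Ψ ν) t ω ∈ B} ∪ S) := measure_mono_ae hsub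
        _ ≤ P {ω | Lbar (Ψ ν) t ω ∈ B} + P S := measure_union_le _ _
        _ ≤ _ := add_le_add_right hPS _
    -- per-time log estimate
    have hlog : ∀ t > (0 : ℝ),
        (⨆ ν : I, ENNReal.log (P {ω | L ν t ω ∈ A})) ≤
          ((Real.log 2 : ℝ) : EReal) +
            max (LP t) ((Real.log C' - N * (δ * t) : ℝ) : EReal) := by
      intro t ht
      refine iSup_le fun ν => ?_
      have h1 := key t ht ν
      set pB := P {ω | Lbar (Ψ ν) t ω ∈ B} with hpB
      set q : ℝ≥0∞ := ENNReal.ofReal (C' / Real.exp (N * (δ * t))) with hq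
      have h2 : P {ω | L ν t ω ∈ A} ≤ 2 * max pB q := by
        rw [two_mul]
        exact h1.trans (add_le_add (le_max_left _ _) (le_max_right _ _))
      have hlogq : ENNReal.log q = ((Real.log C' - N * (δ * t) : ℝ) : EReal) := by
        rw [hq, ENNReal.log_ofReal_of_pos (by positivity),
          Real.log_div (ne_of_gt hC'pos) (Real.exp_ne_zero _), Real.log_exp]
      have hlog2 : ENNReal.log 2 = ((Real.log 2 : ℝ) : EReal) := by
        rw [show (2 : ℝ≥0∞) = ENNReal.ofReal 2 by norm_num,
          ENNReal.log_ofReal_of_pos (by norm_num)]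
      calc ENNReal.log (P {ω | L ν t ω ∈ A}) ≤ ENNReal.log (2 * max pB q) :=
            ENNReal.log_monotone h2
        _ = ENNReal.log 2 + ENNReal.log (max pB q) := ENNReal.log_mul_add
        _ = ENNReal.log 2 + max (ENNReal.log pB) (ENNReal.log q) := by
            rw [ENNReal.log_monotone.map_max]
        _ ≤ ((Real.log 2 : ℝ) : EReal) +
              max (LP t) ((Real.log C' - N * (δ * t) : ℝ) : EReal) := by
            rw [hlog2]
            refine add_le_add_right (max_le_max ?_ (le_of_eq hlogq)) _
            exact le_biSup (fun ν' => ENNReal.log (P {ω | Lbar ν' t ω ∈ B})) ⟨ν, rfl⟩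
    -- the two comparison functions
    set u : ℝ → EReal := fun t =>
      ((1 / t : ℝ) : EReal) * ((Real.log 2 : ℝ) : EReal) + ((1 / t : ℝ) : EReal) * LP t
      with hudef
    set w : ℝ → EReal := fun t =>
      (((1 / t) * Real.log 2 + (1 / t) * (Real.log C' - N * (δ * t)) : ℝ) : EReal) with hwdef
    have hFuw : ∀ᶠ t in atTop, F t ≤ max (u t) (w t) := by
      filter_upwards [eventually_gt_atTop (0 : ℝ)] with t ht
      have h0t : (0 : ℝ) ≤ 1 / t := by positivity
      have h0e : (0 : EReal) ≤ ((1 / t : ℝ) : EReal) := by exact_mod_cast h0t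
      have hmul : Monotone (fun y : EReal => ((1 / t : ℝ) : EReal) * y) :=
        fun a b h => mul_le_mul_of_nonneg_left h h0e
      have haddm : Monotone
          (fun y : EReal => ((1 / t : ℝ) : EReal) * ((Real.log 2 : ℝ) : EReal) + y) :=
        fun a b h => add_le_add_right h _
      calc F t ≤ ((1 / t : ℝ) : EReal) *
            (((Real.log 2 : ℝ) : EReal) +
              max (LP t) ((Real.log C' - N * (δ * t) : ℝ) : EReal)) :=
            mul_le_mul_of_nonneg_left (hlog t ht) h0e
        _ = ((1 / t : ℝ) : EReal) * ((Real.log 2 : ℝ) : EReal) +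
            ((1 / t : ℝ) : EReal) *
              max (LP t) ((Real.log C' - N * (δ * t) : ℝ) : EReal) :=
            ereal_coe_mul_add _ _ h0t _
        _ = ((1 / t : ℝ) : EReal) * ((Real.log 2 : ℝ) : EReal) +
            max (((1 / t : ℝ) : EReal) * LP t)
              (((1 / t : ℝ) : EReal) * ((Real.log C' - N * (δ * t) : ℝ) : EReal)) := by
            rw [hmul.map_max]
        _ = max (u t) (w t) := by
            rw [haddm.map_max]
            congr 1 <;> norm_cast
    -- limsup of the z-part is 0
    have hz : limsup (fun t : ℝ =>
        ((1 / t : ℝ) : EReal) * ((Real.log 2 : ℝ) : EReal)) atTop = 0 := by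
      have h1 : Tendsto (fun t : ℝ => (1 / t) * Real.log 2) atTop (nhds 0) := by
        simpa [one_div] using tendsto_inv_atTop_zero.mul_const (Real.log 2)
      have h2 : Tendsto (fun t : ℝ =>
          ((1 / t * Real.log 2 : ℝ) : EReal)) atTop (nhds (0 : EReal)) := by
        rw [show (0 : EReal) = ((0 : ℝ) : EReal) from rfl]
        exact EReal.tendsto_coe.2 h1
      simp only [← EReal.coe_mul]
      exact h2.limsup_eq
    -- limsup of u
    have hu : limsup u atTop ≤ -(c : EReal) := by
      have heq : u = (fun t : ℝ => ((1 / t : ℝ) : EReal) * ((Real.log 2 : ℝ) : EReal)) +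
          (fun t : ℝ => ((1 / t : ℝ) : EReal) * LP t) := rfl
      rw [heq]
      refine (EReal.limsup_add_le (Or.inl ?_) (Or.inl ?_)).trans ?_
      · rw [hz]; exact EReal.zero_ne_bot
      · rw [hz]; exact EReal.zero_ne_top
      · rw [hz, zero_add]; exact hLP
    -- limsup of w
    have hw : limsup w atTop ≤ -(c : EReal) := by
      apply limsup_le_of_le (by isBoundedDefault)
      filter_upwards [eventually_ge_atTop (max 1 (Real.log 2 + Real.log C'))] with t htt
      have ht1 : (1 : ℝ) ≤ t := le_trans (le_max_left _ _) htt
      have ht0 : (0 : ℝ) < t := lt_of_lt_of_le one_pos ht1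
      have hs : Real.log 2 + Real.log C' ≤ t := le_trans (le_max_right _ _) htt
      have harith : (1 / t) * Real.log 2 + (1 / t) * (Real.log C' - N * (δ * t)) ≤ -c := by
        have h1 : (1 / t) * Real.log 2 + (1 / t) * (Real.log C' - N * (δ * t)) =
            (Real.log 2 + Real.log C') / t - N * δ := by
          field_simp
          ring
        rw [h1]
        have h2 : (Real.log 2 + Real.log C') / t ≤ 1 := (div_le_one ht0).2 hs
        linarith
      show ((1 / t * Real.log 2 + 1 / t * (Real.log C' - N * (δ * t)) : ℝ) : EReal) ≤
        -(c : EReal)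
      rw [← EReal.coe_neg]
      exact_mod_cast harith
    -- conclusion
    calc limsup F atTop ≤ limsup (fun t => max (u t) (w t)) atTop :=
          limsup_le_limsup hFuw
      _ = max (limsup u atTop) (limsup w atTop) := limsup_max
      _ ≤ -(c : EReal) := max_le hu hw
  -- Conclusion
  refine EReal.le_neg_of_le_neg (le_of_forall_lt_imp_le_of_dense fun b hb => ?_)
  induction b with
  | bot => exact bot_le
  | top => exact absurd hb not_top_lt
  | coe b =>
      refine EReal.le_neg_of_le_neg ?_
      rcases le_or_gt b 0 with hb0 | hb0
      · refine hF0.trans ?_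
        rw [← EReal.coe_neg]
        exact_mod_cast neg_nonneg.2 hb0
      · exact main b hb0 hb
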